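/- Let T be a finite tree rooted at a vertex r. Then for every vertex v of T, rho''(T_v) equals the sum over all children u of v of rho'(T_u). -/

import Mathlib

open scoped Classical

variable {V : Type*}

/-- Two edges `e₁, e₂` have a common edge in `H` if some edge of `H`, different from both,
joins an endvertex of `e₁` to an endvertex of `e₂`. -/
def HasCommonEdge (H : SimpleGraph V) (e₁ e₂ : Sym2 V) : Prop :=
  ∃ x y : V, x ∈ e₁ ∧ y ∈ e₂ ∧ H.Adj x y ∧ s(x, y) ≠ e₁ ∧ s(x, y) ≠ e₂

/-- `S` is an edge open packing set of `H`. -/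
def IsEOP (H : SimpleGraph V) (S : Set (Sym2 V)) : Prop :=
  S ⊆ H.edgeSet ∧ ∀ e₁ ∈ S, ∀ e₂ ∈ S, e₁ ≠ e₂ → ¬ HasCommonEdge H e₁ e₂

/-- The edge open packing number of `H`: the maximum cardinality of an EOP set of `H`. -/
noncomputable def eopNum (H : SimpleGraph V) : ℕ :=
  sSup {n | ∃ S : Set (Sym2 V), IsEOP H S ∧ S.ncard = n}

/-- `deg_S(x)`: the number of edges of `S` incident with `x`. -/
noncomputable def degS (S : Set (Sym2 V)) (x : V) : ℕ :=
  {e ∈ S | x ∈ e}.ncard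

/-- In the tree `T` rooted at `r`, the vertex `u` belongs to the subtree `T_v` (i.e. `u` is
`v` itself or a descendant of `v`) iff every walk from `u` to the root `r` passes through
`v`. -/
def InSubtree (T : SimpleGraph V) (r v u : V) : Prop :=
  ∀ p : T.Walk u r, v ∈ p.support

/-- The subtree `T_v` of the tree `T` rooted at `r`, induced by `v` together with all of its
descendants (realized as the subgraph of `T` on the same vertex set whose edges are exactly
the edges of `T` with both endvertices in `T_v`). -/
def subtree (T : SimpleGraph V) (r v : V) : SimpleGraph V where
  Adj a b := T.Adj a b ∧ InSubtree T r v a ∧ InSubtree T r v b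
  symm := ⟨by rintro a b ⟨h, ha, hb⟩; exact ⟨h.symm, hb, ha⟩⟩
  loopless := ⟨fun a h => T.irrefl h.1⟩

/-- `ρᶜ(H, v)`: the maximum cardinality of an EOP set `S` of `H` such that `deg_S(v) ≥ 1`
and every vertex joined to `v` by an edge of `S` has exactly one incident edge in `S`
(i.e. `v` is the center of a star of the subgraph induced by `S`); `0` if no such set
exists. -/
noncomputable def rhoC (H : SimpleGraph V) (v : V) : ℕ :=
  sSup {n | ∃ S : Set (Sym2 V), IsEOP H S ∧ 1 ≤ degS S v ∧
    (∀ u : V, s(v, u) ∈ S → degS S u = 1) ∧ S.ncard = n}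

/-- `ρˡ(H, v)`: the maximum cardinality of an EOP set `S` of `H` with `deg_S(v) = 1`
(i.e. `v` is a leaf of a star of the subgraph induced by `S`); `0` if no such set exists. -/
noncomputable def rhoL (H : SimpleGraph V) (v : V) : ℕ :=
  sSup {n | ∃ S : Set (Sym2 V), IsEOP H S ∧ degS S v = 1 ∧ S.ncard = n}

/-- `ρ'(H, v)`: the maximum cardinality of an EOP set `S` of `H` with `deg_S(v) = 0`. -/
noncomputable def rhoP (H : SimpleGraph V) (v : V) : ℕ :=
  sSup {n | ∃ S : Set (Sym2 V), IsEOP H S ∧ degS S v = 0 ∧ S.ncard = n}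

/-- `ρ''(H, v)`: the maximum cardinality of an EOP set `S` of `H` with `deg_S(x) = 0` for
every vertex `x` in the closed neighborhood of `v` in `H`. -/
noncomputable def rhoPP (H : SimpleGraph V) (v : V) : ℕ :=
  sSup {n | ∃ S : Set (Sym2 V), IsEOP H S ∧
    (∀ x : V, x = v ∨ H.Adj v x → degS S x = 0) ∧ S.ncard = n}
open SimpleGraph

noncomputable def pth {T : SimpleGraph V} (hT : T.IsTree) (r w : V) : T.Walk w r :=
  (hT.existsUnique_path w r).choose

lemma pth_isPath {T : SimpleGraph V} (hT : T.IsTree) (r w : V) : (pth hT r w).IsPath :=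
  (hT.existsUnique_path w r).choose_spec.1

lemma pth_unique {T : SimpleGraph V} (hT : T.IsTree) {r w : V} (q : T.Walk w r)
    (hq : q.IsPath) : q = pth hT r w :=
  (hT.existsUnique_path w r).choose_spec.2 q hq

lemma inSubtree_iff {T : SimpleGraph V} (hT : T.IsTree) {r v w : V} :
    InSubtree T r v w ↔ v ∈ (pth hT r w).support := by
  constructor
  · exact fun h => h _
  · intro hv p
    have hb : p.bypass = pth hT r w := pth_unique hT _ p.bypass_isPath
    exact p.support_bypass_subset (hb ▸ hv)

lemma inSubtree_self {T : SimpleGraph V} {r v : V} : InSubtree T r v v :=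
  fun p => p.start_mem_support

lemma inSubtree_trans {T : SimpleGraph V} {r v u w : V} (h1 : InSubtree T r v u)
    (h2 : InSubtree T r u w) : InSubtree T r v w := fun p => by
  have hu : u ∈ p.support := h2 p
  exact p.support_dropUntil_subset hu (h1 (p.dropUntil u hu))

lemma take_drop_inter {T : SimpleGraph V} {a c x y : V} {p : T.Walk a c} (hp : p.IsPath)
    (hx : x ∈ p.support) (hy1 : y ∈ (p.takeUntil x hx).support)
    (hy2 : y ∈ (p.dropUntil x hx).support) : y = x := by
  by_contra hne
  have hsup : p.support = (p.takeUntil x hx).support ++ (p.dropUntil x hx).support.tail := by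
    conv_lhs => rw [← p.take_spec hx]
    exact Walk.support_append _ _
  have hnd := hp.support_nodup
  rw [hsup, List.nodup_append] at hnd
  have hy2' : y ∈ (p.dropUntil x hx).support.tail := by
    have := (p.dropUntil x hx).support_eq_cons
    rw [this] at hy2
    rcases List.mem_cons.mp hy2 with h | h
    · exact absurd h hne
    · exact h
  exact hnd.2.2 y hy1 y hy2' rfl

lemma pth_dropUntil {T : SimpleGraph V} (hT : T.IsTree) {r a x : V}
    (hx : x ∈ (pth hT r a).support) :
    (pth hT r a).dropUntil x hx = pth hT r x :=
  pth_unique hT _ ((pth_isPath hT r a).dropUntil hx)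

lemma not_mem_pth_of_mem {T : SimpleGraph V} (hT : T.IsTree) {r w x : V}
    (hx : x ∈ (pth hT r w).support) (hne : x ≠ w) : w ∉ (pth hT r x).support := by
  intro hw
  rw [← pth_dropUntil hT hx] at hw
  have hwt : w ∈ ((pth hT r w).takeUntil x hx).support := Walk.start_mem_support _
  exact hne (take_drop_inter (pth_isPath hT r w) hx hwt hw).symm

lemma pth_cons {T : SimpleGraph V} (hT : T.IsTree) {r a b : V} (hadj : T.Adj a b)
    (hnb : a ∉ (pth hT r b).support) :
    pth hT r a = Walk.cons hadj (pth hT r b) :=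
  (pth_unique hT _ ((Walk.cons_isPath_iff _ _).2 ⟨pth_isPath hT r b, hnb⟩)).symm

lemma adj_mem_or {T : SimpleGraph V} (hT : T.IsTree) (r : V) {a b : V} (hadj : T.Adj a b) :
    a ∈ (pth hT r b).support ∨ b ∈ (pth hT r a).support := by
  by_cases h : a ∈ (pth hT r b).support
  · exact Or.inl h
  · right
    rw [pth_cons hT hadj h]
    simp [Walk.support_cons]

lemma child_not_mem_pth {T : SimpleGraph V} (hT : T.IsTree) {r v u : V} (hadj : T.Adj v u)
    (hu : InSubtree T r v u) : u ∉ (pth hT r v).support := by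
  intro h
  exact not_mem_pth_of_mem hT h hadj.ne' ((inSubtree_iff hT).1 hu)

lemma pth_child {T : SimpleGraph V} (hT : T.IsTree) {r v u : V} (hadj : T.Adj v u)
    (hu : InSubtree T r v u) : pth hT r u = Walk.cons hadj.symm (pth hT r v) :=
  pth_cons hT hadj.symm (child_not_mem_pth hT hadj hu)

lemma not_inSubtree_child {T : SimpleGraph V} (hT : T.IsTree) {r v u : V} (hadj : T.Adj v u)
    (hu : InSubtree T r v u) : ¬ InSubtree T r u v := by
  rw [inSubtree_iff hT]
  exact child_not_mem_pth hT hadj hu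

lemma exists_child {T : SimpleGraph V} (hT : T.IsTree) {r v : V} :
    ∀ {w : V}, InSubtree T r v w → w ≠ v →
    ∃ u, T.Adj v u ∧ InSubtree T r v u ∧ InSubtree T r u w := by
  suffices H : ∀ n (w : V), (pth hT r w).length = n → InSubtree T r v w → w ≠ v →
      ∃ u, T.Adj v u ∧ InSubtree T r v u ∧ InSubtree T r u w from
    fun {w} hw hne => H _ w rfl hw hne
  intro n
  induction n using Nat.strong_induction_on with
  | _ n IH =>
    intro w hlen hw hne
    have hv : v ∈ (pth hT r w).support := (inSubtree_iff hT).1 hw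
    have hnn : ¬ (pth hT r w).Nil := by
      intro hnil
      rw [Walk.nil_iff_support_eq.mp hnil] at hv
      simp at hv
      exact hne hv.symm
    have hadj : T.Adj w ((pth hT r w).getVert 1) := (pth hT r w).adj_snd hnn
    have htail : Walk.cons hadj ((pth hT r w).tail) = pth hT r w :=
      Walk.cons_tail_eq _ hnn
    have htp : (pth hT r w).tail.IsPath := by
      have h := pth_isPath hT r w
      rw [← htail, Walk.cons_isPath_iff] at h
      exact h.1
    have hteq : (pth hT r w).tail = pth hT r ((pth hT r w).getVert 1) := pth_unique hT _ htp
    have hsup : (pth hT r w).support = w :: (pth hT r w).tail.support :=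
      (Walk.cons_support_tail hnn).symm
    by_cases hcase : (pth hT r w).getVert 1 = v
    · refine ⟨w, ?_, hw, inSubtree_self⟩
      exact (hcase ▸ hadj).symm
    · have hvt : v ∈ (pth hT r ((pth hT r w).getVert 1)).support := by
        rw [← hteq]
        rw [hsup] at hv
        rcases List.mem_cons.mp hv with h | h
        · exact absurd h.symm hne
        · exact h
      have hlt : (pth hT r ((pth hT r w).getVert 1)).length < n := by
        have h1 := Walk.length_tail_add_one hnn
        rw [hteq] at h1
        omega
      obtain ⟨u, h1, h2, h3⟩ := IH _ hlt _ rfl ((inSubtree_iff hT).2 hvt) hcase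
      refine ⟨u, h1, h2, (inSubtree_iff hT).2 ?_⟩
      have hu : u ∈ (pth hT r ((pth hT r w).getVert 1)).support := (inSubtree_iff hT).1 h3
      rw [hsup, ← hteq] at *
      exact List.mem_cons_of_mem _ hu

lemma unique_child {T : SimpleGraph V} (hT : T.IsTree) {r v u1 u2 w : V}
    (h1 : T.Adj v u1) (hs1 : InSubtree T r v u1) (h2 : T.Adj v u2) (hs2 : InSubtree T r v u2)
    (hw1 : InSubtree T r u1 w) (hw2 : InSubtree T r u2 w) : u1 = u2 := by
  by_contra hne
  have hp1 : pth hT r u1 = Walk.cons h1.symm (pth hT r v) := pth_child hT h1 hs1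
  have hp2 : pth hT r u2 = Walk.cons h2.symm (pth hT r v) := pth_child hT h2 hs2
  have hn1 : u1 ∉ (pth hT r v).support := child_not_mem_pth hT h1 hs1
  have hn2 : u2 ∉ (pth hT r v).support := child_not_mem_pth hT h2 hs2
  -- dispose of the cases w = u1 or w = u2
  by_cases hwu1 : w = u1
  · subst hwu1
    have : u2 ∈ (pth hT r w).support := (inSubtree_iff hT).1 hw2
    rw [hp1] at this
    rcases List.mem_cons.mp this with h | h
    · exact hne h.symm
    · exact hn2 h
  by_cases hwu2 : w = u2
  · subst hwu2
    have : u1 ∈ (pth hT r w).support := (inSubtree_iff hT).1 hw1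
    rw [hp2] at this
    rcases List.mem_cons.mp this with h | h
    · exact hne h
    · exact hn1 h
  -- main case
  have hm1 : u1 ∈ (pth hT r w).support := (inSubtree_iff hT).1 hw1
  have hm2 : u2 ∈ (pth hT r w).support := (inSubtree_iff hT).1 hw2
  -- u1 is in the takeUntil u2 part
  have hu1take : u1 ∈ ((pth hT r w).takeUntil u2 hm2).support := by
    have hsplit : (pth hT r w).support =
        ((pth hT r w).takeUntil u2 hm2).support ++ ((pth hT r w).dropUntil u2 hm2).support.tail := by
      conv_lhs => rw [← (pth hT r w).take_spec hm2]
      exact Walk.support_append _ _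
    rw [hsplit] at hm1
    rcases List.mem_append.mp hm1 with h | h
    · exact h
    · exfalso
      have hdrop : (pth hT r w).dropUntil u2 hm2 = pth hT r u2 := pth_dropUntil hT hm2
      have : u1 ∈ ((pth hT r w).dropUntil u2 hm2).support := List.mem_of_mem_tail h
      rw [hdrop, hp2] at this
      rcases List.mem_cons.mp this with h' | h'
      · exact hne h'
      · exact hn1 h'
  -- build the walk (takeUntil u2).takeUntil u1 ++ pth u1 : Walk w r
  set q2 := (pth hT r w).takeUntil u2 hm2 with hq2
  have hq2p : q2.IsPath := (pth_isPath hT r w).takeUntil hm2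
  have W := (q2.takeUntil u1 hu1take).append (pth hT r u1)
  have hu2W : u2 ∈ ((q2.takeUntil u1 hu1take).append (pth hT r u1)).support := hw2 _
  rw [Walk.support_append] at hu2W
  rcases List.mem_append.mp hu2W with h | h
  · -- u2 ∈ takeUntil u1 of q2; but u2 is endpoint of q2, appears also in dropUntil tail side
    have hu2drop : u2 ∈ (q2.dropUntil u1 hu1take).support := Walk.end_mem_support _
    exact hne (take_drop_inter hq2p hu1take h hu2drop).symm
  · have : u2 ∈ (pth hT r u1).support := List.mem_of_mem_tail h
    rw [hp1] at this
    rcases List.mem_cons.mp this with h' | h'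
    · exact hne h'.symm
    · exact hn2 h'

lemma edge_in_subtree {T : SimpleGraph V} (hT : T.IsTree) {r v u a b : V}
    (hadj : T.Adj a b) (hav : a ≠ v) (hbv : b ≠ v)
    (hcu : T.Adj v u) (hsu : InSubtree T r v u) (ha : InSubtree T r u a) :
    InSubtree T r u b := by
  rcases adj_mem_or hT r hadj with h | h
  · -- a ∈ pth b : pth b = cons (b,a) (pth a)
    have hb : b ∉ (pth hT r a).support := not_mem_pth_of_mem hT h hadj.ne
    have hpb : pth hT r b = Walk.cons hadj.symm (pth hT r a) := pth_cons hT hadj.symm hb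
    rw [inSubtree_iff hT] at ha ⊢
    rw [hpb]
    exact List.mem_cons_of_mem _ ha
  · -- b ∈ pth a : pth a = cons (a,b) (pth b)
    have hanb : a ∉ (pth hT r b).support := not_mem_pth_of_mem hT h hadj.ne'
    have hpa : pth hT r a = Walk.cons hadj (pth hT r b) := pth_cons hT hadj hanb
    rw [inSubtree_iff hT] at ha ⊢
    rw [hpa] at ha
    rcases List.mem_cons.mp ha with h' | h'
    · -- u = a : then a is a child of v, so pth a = cons (a,v) (pth v), forcing b = v
      exfalso
      subst h'
      have hpa2 : pth hT r u = Walk.cons hcu.symm (pth hT r v) := pth_child hT hcu hsu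
      have : (Walk.cons hadj (pth hT r b)).getVert 1 = (Walk.cons hcu.symm (pth hT r v)).getVert 1 := by
        rw [← hpa, hpa2]
      rw [Walk.getVert_cons_succ, Walk.getVert_cons_succ, Walk.getVert_zero, Walk.getVert_zero] at this
      exact hbv this
    · exact h'

lemma degS_eq_zero_iff [Fintype V] {S : Set (Sym2 V)} {x : V} :
    degS S x = 0 ↔ ∀ e ∈ S, x ∉ e := by
  rw [degS, Set.ncard_eq_zero (Set.toFinite _), Set.eq_empty_iff_forall_notMem]
  simp only [Set.mem_setOf_eq, not_and]

lemma eopBddAbove [Fintype V] (P : Set (Sym2 V) → Prop) :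
    BddAbove {n | ∃ S : Set (Sym2 V), P S ∧ S.ncard = n} := by
  refine ⟨(Set.univ : Set (Sym2 V)).ncard, fun n hn => ?_⟩
  obtain ⟨S, -, rfl⟩ := hn
  exact Set.ncard_le_ncard (Set.subset_univ S) (Set.toFinite _)

lemma exists_max [Fintype V] (P : Set (Sym2 V) → Prop) (h0 : P ∅) :
    ∃ S : Set (Sym2 V), P S ∧ S.ncard = sSup {n | ∃ S : Set (Sym2 V), P S ∧ S.ncard = n} :=
  Nat.sSup_mem ⟨0, Set.mem_setOf_eq ▸ ⟨∅, h0, Set.ncard_empty _⟩⟩ (eopBddAbove P)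

lemma le_sSup_ncard [Fintype V] (P : Set (Sym2 V) → Prop) {S : Set (Sym2 V)} (hS : P S) :
    S.ncard ≤ sSup {n | ∃ S : Set (Sym2 V), P S ∧ S.ncard = n} :=
  le_csSup (eopBddAbove P) ⟨S, hS, rfl⟩

lemma ncard_biUnion_eq [Fintype V] (s : Finset V) (f : V → Set (Sym2 V))
    (hdisj : ∀ a ∈ s, ∀ b ∈ s, a ≠ b → Disjoint (f a) (f b)) :
    (⋃ u ∈ s, f u).ncard = ∑ u ∈ s, (f u).ncard := by
  induction s using Finset.induction_on with
  | empty => simp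
  | @insert a s ha ih =>
    rw [Finset.set_biUnion_insert, Set.ncard_union_eq ?_ (Set.toFinite _) (Set.toFinite _),
      Finset.sum_insert ha, ih ?_]
    · intro x hx y hy hxy
      exact hdisj x (Finset.mem_insert_of_mem hx) y (Finset.mem_insert_of_mem hy) hxy
    · simp only [Set.disjoint_iUnion_right]
      intro b hb
      exact hdisj a (Finset.mem_insert_self a s) b (Finset.mem_insert_of_mem hb)
        (fun h => ha (h ▸ hb))

lemma rhoP_eq (H : SimpleGraph V) (u : V) :
    rhoP H u = sSup {n | ∃ S : Set (Sym2 V), (IsEOP H S ∧ degS S u = 0) ∧ S.ncard = n} := by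
  rw [rhoP]; congr 1; ext n; simp [and_assoc]

lemma rhoPP_eq (H : SimpleGraph V) (v : V) :
    rhoPP H v = sSup {n | ∃ S : Set (Sym2 V),
      (IsEOP H S ∧ ∀ x : V, x = v ∨ H.Adj v x → degS S x = 0) ∧ S.ncard = n} := by
  rw [rhoPP]; congr 1; ext n; simp [and_assoc]

lemma emptyIsEOP (H : SimpleGraph V) : IsEOP H (∅ : Set (Sym2 V)) :=
  ⟨Set.empty_subset _, fun e1 h1 => absurd h1 (Set.notMem_empty e1)⟩

lemma subtree_adj_mono {T : SimpleGraph V} {r v u : V} (hcu : T.Adj v u)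
    (hsu : InSubtree T r v u) {a b : V} (hab : (subtree T r u).Adj a b) :
    (subtree T r v).Adj a b :=
  ⟨hab.1, inSubtree_trans hsu hab.2.1, inSubtree_trans hsu hab.2.2⟩

lemma mem_edge_subtree {T : SimpleGraph V} {r u : V} {e : Sym2 V}
    (he : e ∈ (subtree T r u).edgeSet) {x : V} (hx : x ∈ e) : InSubtree T r u x := by
  induction e using Sym2.ind with
  | _ a b =>
    rw [mem_edgeSet] at he
    rcases Sym2.mem_iff.mp hx with rfl | rfl
    · exact he.2.1
    · exact he.2.2

lemma hasCommonEdge_mono {H H' : SimpleGraph V} (h : ∀ a b, H.Adj a b → H'.Adj a b)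
    {e1 e2 : Sym2 V} : HasCommonEdge H e1 e2 → HasCommonEdge H' e1 e2 := by
  rintro ⟨x, y, hx, hy, hadj, h1, h2⟩
  exact ⟨x, y, hx, hy, h x y hadj, h1, h2⟩
theorem stmt18 [Fintype V] (T : SimpleGraph V) (hT : T.IsTree) (r v : V) :
    rhoPP (subtree T r v) v =
      ∑ᶠ u ∈ {u : V | T.Adj v u ∧ InSubtree T r v u}, rhoP (subtree T r u) u := by
  have hChfin : ({u : V | T.Adj v u ∧ InSubtree T r v u}).Finite := Set.toFinite _
  set chF : Finset V := hChfin.toFinset with hchF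
  have hmemF : ∀ u, u ∈ chF ↔ (T.Adj v u ∧ InSubtree T r v u) := by
    intro u; rw [hchF, Set.Finite.mem_toFinset]; rfl
  have hsum : ∑ᶠ u ∈ {u : V | T.Adj v u ∧ InSubtree T r v u}, rhoP (subtree T r u) u
      = ∑ u ∈ chF, rhoP (subtree T r u) u := by
    rw [← hChfin.coe_toFinset]
    exact finsum_mem_coe_finset _ _
  rw [hsum]
  apply le_antisymm
  · -- ≤ : decompose a maximum EOP set for rhoPP
    rw [rhoPP_eq]
    obtain ⟨S, ⟨hEOP, hdeg⟩, hScard⟩ :=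
      exists_max (fun S => IsEOP (subtree T r v) S ∧
          ∀ x : V, x = v ∨ (subtree T r v).Adj v x → degS S x = 0)
        ⟨emptyIsEOP _, fun x _ => degS_eq_zero_iff.2
          (fun e he => absurd he (Set.notMem_empty e))⟩
    rw [← hScard]
    have hvnot : ∀ e ∈ S, v ∉ e := degS_eq_zero_iff.1 (hdeg v (Or.inl rfl))
    set f : V → Set (Sym2 V) := fun u => {e ∈ S | e ∈ (subtree T r u).edgeSet} with hf
    have hfS : ∀ u, f u ⊆ S := fun u e he => he.1
    have hcover : ∀ e ∈ S, ∃ u ∈ chF, e ∈ (subtree T r u).edgeSet := by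
      intro e he
      have he' : e ∈ (subtree T r v).edgeSet := hEOP.1 he
      have hv_notin : v ∉ e := hvnot e he
      induction e using Sym2.ind with
      | _ a b =>
        rw [SimpleGraph.mem_edgeSet] at he'
        obtain ⟨hab, hsa, hsb⟩ := he'
        have hav : a ≠ v := fun h => hv_notin (h ▸ Sym2.mem_iff.2 (Or.inl rfl))
        have hbv : b ≠ v := fun h => hv_notin (h ▸ Sym2.mem_iff.2 (Or.inr rfl))
        obtain ⟨u, hadj, hsu, hua⟩ := exists_child hT hsa hav
        have hub : InSubtree T r u b := edge_in_subtree hT hab hav hbv hadj hsu hua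
        exact ⟨u, (hmemF u).2 ⟨hadj, hsu⟩, (SimpleGraph.mem_edgeSet _).2 ⟨hab, hua, hub⟩⟩
    have hSeq : S = ⋃ u ∈ chF, f u := by
      ext e
      simp only [Set.mem_iUnion, exists_prop]
      constructor
      · intro he
        obtain ⟨u, hu, heu⟩ := hcover e he
        exact ⟨u, hu, he, heu⟩
      · rintro ⟨u, -, he, -⟩
        exact he
    have hdisj : ∀ a ∈ chF, ∀ b ∈ chF, a ≠ b → Disjoint (f a) (f b) := by
      intro u1 h1 u2 h2 hne
      rw [Set.disjoint_left]
      rintro e ⟨-, he1⟩ ⟨-, he2⟩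
      induction e using Sym2.ind with
      | _ a b =>
        have hx1 : InSubtree T r u1 a := mem_edge_subtree he1 (Sym2.mem_iff.2 (Or.inl rfl))
        have hx2 : InSubtree T r u2 a := mem_edge_subtree he2 (Sym2.mem_iff.2 (Or.inl rfl))
        obtain ⟨hc1, hs1⟩ := (hmemF u1).1 h1
        obtain ⟨hc2, hs2⟩ := (hmemF u2).1 h2
        exact hne (unique_child hT hc1 hs1 hc2 hs2 hx1 hx2)
    rw [hSeq, ncard_biUnion_eq chF f hdisj]
    apply Finset.sum_le_sum
    intro u hu
    obtain ⟨hcu, hsu⟩ := (hmemF u).1 hu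
    rw [rhoP_eq]
    apply le_sSup_ncard
    refine ⟨⟨fun e he => he.2, ?_⟩, ?_⟩
    · intro e1 h1 e2 h2 hne hc
      exact hEOP.2 e1 (h1.1) e2 (h2.1) hne
        (hasCommonEdge_mono (fun a b => subtree_adj_mono hcu hsu) hc)
    · refine degS_eq_zero_iff.2 (fun e he hue => ?_)
      have : degS S u = 0 := hdeg u (Or.inr ⟨hcu, inSubtree_self, hsu⟩)
      exact degS_eq_zero_iff.1 this e (he.1) hue
  · -- ≥ : combine maximum EOP sets for each child
    choose g hg using fun u : V =>
      exists_max (fun S => IsEOP (subtree T r u) S ∧ degS S u = 0)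
        ⟨emptyIsEOP _, degS_eq_zero_iff.2 (fun e he => absurd he (Set.notMem_empty e))⟩
    have hgcard : ∀ u, (g u).ncard = rhoP (subtree T r u) u := by
      intro u; rw [rhoP_eq]; exact (hg u).2
    have hgEOP : ∀ u, IsEOP (subtree T r u) (g u) := fun u => (hg u).1.1
    have hgdeg : ∀ u, degS (g u) u = 0 := fun u => (hg u).1.2
    have hgsub : ∀ u, ∀ e ∈ g u, ∀ x ∈ e, InSubtree T r u x :=
      fun u e he x hx => mem_edge_subtree ((hgEOP u).1 he) hx
    set S : Set (Sym2 V) := ⋃ u ∈ chF, g u with hS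
    -- an edge of S belongs to a unique child's subtree
    have hchild : ∀ u ∈ chF, ∀ e ∈ g u, ∀ u' ∈ chF, ∀ x ∈ e,
        InSubtree T r u' x → u' = u := by
      intro u hu e he u' hu' x hx hx'
      obtain ⟨hc1, hs1⟩ := (hmemF u).1 hu
      obtain ⟨hc2, hs2⟩ := (hmemF u').1 hu'
      exact unique_child hT hc2 hs2 hc1 hs1 hx' (hgsub u e he x hx)
    have hdisj : ∀ a ∈ chF, ∀ b ∈ chF, a ≠ b → Disjoint (g a) (g b) := by
      intro u1 h1 u2 h2 hne
      rw [Set.disjoint_left]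
      intro e he1 he2
      induction e using Sym2.ind with
      | _ a b =>
        exact hne ((hchild u2 h2 _ he2 u1 h1 a (Sym2.mem_iff.2 (Or.inl rfl))
          (hgsub u1 _ he1 a (Sym2.mem_iff.2 (Or.inl rfl)))))
    have hcard : S.ncard = ∑ u ∈ chF, (g u).ncard := ncard_biUnion_eq chF g hdisj
    rw [rhoPP_eq]
    have hle : ∑ u ∈ chF, rhoP (subtree T r u) u = S.ncard := by
      rw [hcard]
      exact (Finset.sum_congr rfl (fun u _ => (hgcard u).symm))
    rw [hle]
    apply le_sSup_ncard
    constructor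
    · constructor
      · -- S ⊆ edgeSet (subtree T r v)
        intro e he
        rw [hS] at he
        simp only [Set.mem_iUnion, exists_prop] at he
        obtain ⟨u, hu, heu⟩ := he
        obtain ⟨hcu, hsu⟩ := (hmemF u).1 hu
        have := (hgEOP u).1 heu
        induction e using Sym2.ind with
        | _ a b =>
          rw [SimpleGraph.mem_edgeSet] at this ⊢
          exact subtree_adj_mono hcu hsu this
      · -- EOP property
        intro e1 h1 e2 h2 hne hc
        rw [hS] at h1 h2
        simp only [Set.mem_iUnion, exists_prop] at h1 h2
        obtain ⟨u1, hu1, he1⟩ := h1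
        obtain ⟨u2, hu2, he2⟩ := h2
        obtain ⟨x, y, hx, hy, hadj, hne1, hne2⟩ := hc
        obtain ⟨hc1, hs1⟩ := (hmemF u1).1 hu1
        obtain ⟨hc2, hs2⟩ := (hmemF u2).1 hu2
        have hx1 : InSubtree T r u1 x := hgsub u1 e1 he1 x hx
        have hy2 : InSubtree T r u2 y := hgsub u2 e2 he2 y hy
        have hxv : x ≠ v := fun h => not_inSubtree_child hT hc1 hs1 (h ▸ hx1)
        have hyv : y ≠ v := fun h => not_inSubtree_child hT hc2 hs2 (h ▸ hy2)
        have hy1 : InSubtree T r u1 y := edge_in_subtree hT hadj.1 hxv hyv hc1 hs1 hx1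
        have hu12 : u1 = u2 := unique_child hT hc1 hs1 hc2 hs2 hy1 hy2
        subst hu12
        exact (hgEOP u1).2 e1 he1 e2 he2 hne
          ⟨x, y, hx, hy, ⟨hadj.1, hx1, hy1⟩, hne1, hne2⟩
    · -- degree condition on closed neighborhood of v
      intro x hx
      refine degS_eq_zero_iff.2 (fun e he hxe => ?_)
      rw [hS] at he
      simp only [Set.mem_iUnion, exists_prop] at he
      obtain ⟨u, hu, heu⟩ := he
      obtain ⟨hcu, hsu⟩ := (hmemF u).1 hu
      have hxu : InSubtree T r u x := hgsub u e heu x hxe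
      rcases hx with rfl | hadj
      · exact not_inSubtree_child hT hcu hsu hxu
      · -- x is a child; then u = x and deg_{g x}(x) = 0
        have hxch : T.Adj v x ∧ InSubtree T r v x := ⟨hadj.1, hadj.2.2⟩
        have hux : u = x := unique_child hT hcu hsu hxch.1 hxch.2 hxu inSubtree_self
        subst hux
        exact degS_eq_zero_iff.1 (hgdeg u) e heu hxe
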